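/- arXiv:1509.02503 — 3 statements merged into one kernel-verified Lean document; each statement's English description precedes it below -/
import Mathlib

section
/- For every 3×3 matrix Y = (y^i_j), perm_3(Y) equals the determinant of the 7×7 matrix given by Grenet's construction: the matrix with rows (0, y^1_1, y^2_1, y^3_1, 0, 0, 0), (0, 1, 0, 0, y^3_3, y^2_3, 0), (0, 0, 1, 0, 0, y^1_3, y^3_3), (0, 0, 0, 1, y^1_3, 0, y^2_3), (y^2_2, 0, 0, 0, 1, 0, 0), (y^3_2, 0, 0, 0, 0, 1, 0), (y^1_2, 0, 0, 0, 0, 0, 1). -/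
set_option maxHeartbeats 1000000 in
set_option maxRecDepth 20000 in
/-- Grenet's expression: the 3×3 permanent equals the determinant of an
explicit 7×7 matrix whose entries are variables, constants 0 and 1. -/
theorem perm_three_eq_det_grenet {R : Type*} [CommRing R]
    (Y : Matrix (Fin 3) (Fin 3) R) :
    (∑ σ : Equiv.Perm (Fin 3), ∏ i, Y i (σ i)) =
      Matrix.det
        !![0,     Y 0 0, Y 1 0, Y 2 0, 0,     0,     0;
           0,     1,     0,     0,     Y 2 2, Y 1 2, 0;
           0,     0,     1,     0,     0,     Y 0 2, Y 2 2;
           0,     0,     0,     1,     Y 0 2, 0,     Y 1 2;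
           Y 1 1, 0,     0,     0,     1,     0,     0;
           Y 2 1, 0,     0,     0,     0,     1,     0;
           Y 0 1, 0,     0,     0,     0,     0,     1] := by
  have hL : (∑ σ : Equiv.Perm (Fin 3), ∏ i, Y i (σ i)) =
      Y 0 0*Y 1 1*Y 2 2 + Y 0 0*Y 1 2*Y 2 1 + Y 0 1*Y 1 0*Y 2 2
      + Y 0 1*Y 1 2*Y 2 0 + Y 0 2*Y 1 0*Y 2 1 + Y 0 2*Y 1 1*Y 2 0 := by
    rw [show (Finset.univ : Finset (Equiv.Perm (Fin 3))) =
      {1, Equiv.swap 0 1, Equiv.swap 0 2, Equiv.swap 1 2,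
       Equiv.swap 0 1 * Equiv.swap 1 2, Equiv.swap 1 2 * Equiv.swap 0 1} from by decide,
      Finset.sum_insert (by decide), Finset.sum_insert (by decide),
      Finset.sum_insert (by decide), Finset.sum_insert (by decide),
      Finset.sum_insert (by decide), Finset.sum_singleton]
    simp [Fin.prod_univ_succ, Equiv.swap_apply_def]
    ring
  set M : Matrix (Fin 7) (Fin 7) R :=
        !![0,     Y 0 0, Y 1 0, Y 2 0, 0,     0,     0;
           0,     1,     0,     0,     Y 2 2, Y 1 2, 0;
           0,     0,     1,     0,     0,     Y 0 2, Y 2 2;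
           0,     0,     0,     1,     Y 0 2, 0,     Y 1 2;
           Y 1 1, 0,     0,     0,     1,     0,     0;
           Y 2 1, 0,     0,     0,     0,     1,     0;
           Y 0 1, 0,     0,     0,     0,     0,     1] with hM
  set A : Matrix (Fin 6) (Fin 6) R :=
        !![Y 0 0, Y 1 0, Y 2 0, 0,     0,     0;
           1,     0,     0,     Y 2 2, Y 1 2, 0;
           0,     1,     0,     0,     Y 0 2, Y 2 2;
           0,     0,     1,     Y 0 2, 0,     Y 1 2;
           0,     0,     0,     0,     1,     0;
           0,     0,     0,     0,     0,     1] with hA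
  set B : Matrix (Fin 6) (Fin 6) R :=
        !![Y 0 0, Y 1 0, Y 2 0, 0,     0,     0;
           1,     0,     0,     Y 2 2, Y 1 2, 0;
           0,     1,     0,     0,     Y 0 2, Y 2 2;
           0,     0,     1,     Y 0 2, 0,     Y 1 2;
           0,     0,     0,     1,     0,     0;
           0,     0,     0,     0,     0,     1] with hB
  set C : Matrix (Fin 6) (Fin 6) R :=
        !![Y 0 0, Y 1 0, Y 2 0, 0,     0,     0;
           1,     0,     0,     Y 2 2, Y 1 2, 0;
           0,     1,     0,     0,     Y 0 2, Y 2 2;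
           0,     0,     1,     Y 0 2, 0,     Y 1 2;
           0,     0,     0,     1,     0,     0;
           0,     0,     0,     0,     1,     0] with hC
  have hdet : M.det = Y 1 1 * A.det - Y 2 1 * B.det + Y 0 1 * C.det := by
    have eA : M.submatrix ((4:Fin 7).succAbove) Fin.succ = A := by
      ext i j; fin_cases i <;> fin_cases j <;> rfl
    have eB : M.submatrix ((5:Fin 7).succAbove) Fin.succ = B := by
      ext i j; fin_cases i <;> fin_cases j <;> rfl
    have eC : M.submatrix ((6:Fin 7).succAbove) Fin.succ = C := by
      ext i j; fin_cases i <;> fin_cases j <;> rfl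
    rw [Matrix.det_succ_column_zero, Fin.sum_univ_seven, eA, eB, eC,
      show M 0 0 = 0 from rfl, show M 1 0 = 0 from rfl, show M 2 0 = 0 from rfl,
      show M 3 0 = 0 from rfl, show M 4 0 = Y 1 1 from rfl,
      show M 5 0 = Y 2 1 from rfl, show M 6 0 = Y 0 1 from rfl]
    norm_num [show ((4:Fin 7):ℕ) = 4 from rfl, show ((5:Fin 7):ℕ) = 5 from rfl,
      show ((6:Fin 7):ℕ) = 6 from rfl]
    ring
  have dA : A.det = Y 0 0 * Y 2 2 + Y 0 2 * Y 2 0 := by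
    rw [hA]; simp [Matrix.det_succ_row_zero, Fin.sum_univ_succ, Fin.succAbove]; ring
  have dB : B.det = -(Y 0 0 * Y 1 2) - Y 0 2 * Y 1 0 := by
    rw [hB]; simp [Matrix.det_succ_row_zero, Fin.sum_univ_succ, Fin.succAbove]; ring
  have dC : C.det = Y 1 0 * Y 2 2 + Y 1 2 * Y 2 0 := by
    rw [hC]; simp [Matrix.det_succ_row_zero, Fin.sum_univ_succ, Fin.succAbove]; ring
  rw [hL, hdet, dA, dB, dC]
  ring
end

section
/- Let x be the m×m matrix whose (1,1) entry is 1−m and all other entries are 1. Then the Hessian matrix of second partial derivatives of perm_m evaluated at x is an invertible m²×m² matrix (i.e. has maximal rank m²). -/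
open MvPolynomial Finset Equiv Kronecker

set_option maxHeartbeats 1000000
set_option linter.unusedSectionVars false
set_option linter.unreachableTactic false
set_option linter.unusedTactic false
lemma card_perm_extend {α : Type*} [DecidableEq α] [Fintype α] (s : Finset α) (f : α → α)
    (hf : Set.InjOn f s) :
    (Finset.univ.filter fun σ : Equiv.Perm α => ∀ a ∈ s, σ a = f a).card
      = (Fintype.card α - s.card).factorial := by
  classical
  -- the equivalence from s to its image
  have himg : ∀ a : α, a ∈ s → f a ∈ s.image f := fun a ha => Finset.mem_image_of_mem f ha
  let e : {x // x ∈ s} ≃ {x // x ∈ s.image f} :=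
    Equiv.ofBijective (fun a => ⟨f a, himg a a.2⟩) (by
      constructor
      · rintro ⟨a, ha⟩ ⟨b, hb⟩ hab
        simp only [Subtype.mk.injEq] at hab
        exact Subtype.ext (hf ha hb hab)
      · rintro ⟨y, hy⟩
        obtain ⟨a, ha, rfl⟩ := Finset.mem_image.mp hy
        exact ⟨⟨a, ha⟩, rfl⟩)
  let τ : Equiv.Perm α := e.extendSubtype
  have hτ : ∀ a ∈ s, τ a = f a := fun a ha => by
    exact e.extendSubtype_apply_of_mem a ha
  -- translate: σ ↦ τ⁻¹ * σ
  have hcard : (Finset.univ.filter fun σ : Equiv.Perm α => ∀ a ∈ s, σ a = f a).card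
      = (Finset.univ.filter fun ρ : Equiv.Perm α => ∀ a ∈ s, ρ a = a).card := by
    apply Finset.card_bij (fun σ _ => τ⁻¹ * σ)
    · intro σ hσ
      simp only [Finset.mem_filter, Finset.mem_univ, true_and] at hσ ⊢
      intro a ha
      have := hσ a ha
      simp [Equiv.Perm.mul_apply, this, ← hτ a ha]
    · intro σ hσ σ' hσ' h
      exact mul_left_cancel h
    · intro ρ hρ
      simp only [Finset.mem_filter, Finset.mem_univ, true_and] at hρ ⊢
      exact ⟨τ * ρ, fun a ha => by simp [Equiv.Perm.mul_apply, hρ a ha, hτ a ha], by group⟩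
  rw [hcard]
  have : (Finset.univ.filter fun ρ : Equiv.Perm α => ∀ a ∈ s, ρ a = a).card
      = Fintype.card {ρ : Equiv.Perm α // ∀ a, ¬(a ∉ s) → ρ a = a} := by
    rw [Fintype.card_subtype]
    congr 1
    apply Finset.filter_congr
    intro ρ _
    constructor
    · intro h a ha; exact h a (not_not.mp ha)
    · intro h a ha; exact h a (fun h' => h' ha)
  rw [this, ← Fintype.card_congr (Equiv.Perm.subtypeEquivSubtypePerm (fun a => a ∉ s)),
    Fintype.card_perm]
  congr 1
  rw [Fintype.card_subtype_compl, Fintype.card_coe]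
lemma count_two {m : ℕ} (i k j l : Fin m) (hik : i ≠ k) (hjl : j ≠ l) :
    (Finset.univ.filter fun σ : Equiv.Perm (Fin m) => σ i = j ∧ σ k = l).card
      = (m - 2).factorial := by
  classical
  have fi : (if i = i then j else l) = j := by simp
  have fk : (if k = i then j else l) = l := by rw [if_neg (Ne.symm hik)]
  have hinj : Set.InjOn (fun a => if a = i then j else l) ({i, k} : Finset (Fin m)) := by
    rintro a ha b hb hab
    simp only [Finset.coe_insert, Set.mem_insert_iff, Finset.coe_singleton,
      Set.mem_singleton_iff] at ha hb
    rcases ha with rfl | rfl <;> rcases hb with rfl | rfl <;>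
      simp only [fi, fk] at hab <;>
      first | rfl | (exact absurd hab hjl) | (exact absurd hab.symm hjl)
  have h2 := card_perm_extend ({i, k} : Finset (Fin m)) (fun a => if a = i then j else l) hinj
  rw [Finset.card_insert_of_notMem (by simpa using hik), Finset.card_singleton,
    Fintype.card_fin] at h2
  rw [Finset.filter_congr_decidable] at h2
  refine (congrArg Finset.card (Finset.filter_congr fun σ _ => ?_)).trans
    (h2.trans (by norm_num : (m - (1 + 1)).factorial = (m - 2).factorial))
  simp only [Finset.mem_insert, Finset.mem_singleton, eq_iff_iff]
  constructor
  · rintro ⟨h1, h2⟩ a (rfl | rfl)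
    · simp [h1]
    · rw [if_neg (Ne.symm hik)]; exact h2
  · intro h
    refine ⟨by simpa using h i (Or.inl rfl), ?_⟩
    have := h k (Or.inr rfl)
    rwa [if_neg (Ne.symm hik)] at this

lemma count_three {m : ℕ} (i k z j l w : Fin m) (hik : i ≠ k) (hiz : i ≠ z) (hkz : k ≠ z)
    (hjl : j ≠ l) (hjw : j ≠ w) (hlw : l ≠ w) :
    (Finset.univ.filter fun σ : Equiv.Perm (Fin m) => σ i = j ∧ σ k = l ∧ σ z = w).card
      = (m - 3).factorial := by
  classical
  set f : Fin m → Fin m := fun a => if a = i then j else if a = k then l else w with hf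
  have fi : f i = j := by simp [hf]
  have fk : f k = l := by simp [hf, if_neg (Ne.symm hik)]
  have fz : f z = w := by simp [hf, if_neg (Ne.symm hiz), if_neg (Ne.symm hkz)]
  have hinj : Set.InjOn f ({i, k, z} : Finset (Fin m)) := by
    rintro a ha b hb hab
    simp only [Finset.coe_insert, Set.mem_insert_iff, Finset.coe_singleton,
      Set.mem_singleton_iff] at ha hb
    rcases ha with rfl | rfl | rfl <;> rcases hb with rfl | rfl | rfl <;>
      simp only [fi, fk, fz] at hab <;>
      first
        | rfl
        | (exact absurd hab hjl) | (exact absurd hab.symm hjl)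
        | (exact absurd hab hjw) | (exact absurd hab.symm hjw)
        | (exact absurd hab hlw) | (exact absurd hab.symm hlw)
  have h2 := card_perm_extend ({i, k, z} : Finset (Fin m)) f hinj
  rw [Finset.card_insert_of_notMem (by simp [hik, hiz]),
    Finset.card_insert_of_notMem (by simpa using hkz), Finset.card_singleton,
    Fintype.card_fin] at h2
  rw [Finset.filter_congr_decidable] at h2
  refine (congrArg Finset.card (Finset.filter_congr fun σ _ => ?_)).trans
    (h2.trans (by norm_num : (m - (1 + 1 + 1)).factorial = (m - 3).factorial))
  simp only [Finset.mem_insert, Finset.mem_singleton, eq_iff_iff]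
  constructor
  · rintro ⟨h1, h2, h3⟩ a (rfl | rfl | rfl)
    · rw [fi]; exact h1
    · rw [fk]; exact h2
    · rw [fz]; exact h3
  · intro h
    refine ⟨?_, ?_, ?_⟩
    · have := h i (Or.inl rfl); rwa [fi] at this
    · have := h k (Or.inr (Or.inl rfl)); rwa [fk] at this
    · have := h z (Or.inr (Or.inr rfl)); rwa [fz] at this
lemma pd_prod_zero {m : ℕ} (σ : Equiv.Perm (Fin m)) (s : Finset (Fin m)) (v : Fin m × Fin m)
    (h : ∀ i ∈ s, (i, σ i) ≠ v) :
    pderiv v (∏ i ∈ s, (X (i, σ i) : MvPolynomial (Fin m × Fin m) ℂ)) = 0 := by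
  classical
  induction s using Finset.induction_on with
  | empty => simp
  | insert _ _ hns ih =>
      rename_i a t
      rw [Finset.prod_insert hns, pderiv_mul, ih (fun i hi => h i (Finset.mem_insert_of_mem hi)),
        pderiv_X_of_ne (h a (Finset.mem_insert_self a t))]
      ring

lemma pd_prod {m : ℕ} (σ : Equiv.Perm (Fin m)) (s : Finset (Fin m)) (q : Fin m × Fin m) :
    pderiv q (∏ i ∈ s, (X (i, σ i) : MvPolynomial (Fin m × Fin m) ℂ))
      = if q.1 ∈ s ∧ σ q.1 = q.2 then ∏ i ∈ s.erase q.1, (X (i, σ i) : MvPolynomial (Fin m × Fin m) ℂ)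
        else 0 := by
  classical
  by_cases hq : q.1 ∈ s ∧ σ q.1 = q.2
  · rw [if_pos hq]
    obtain ⟨hmem, hval⟩ := hq
    rw [← Finset.mul_prod_erase s _ hmem, pderiv_mul,
      pd_prod_zero σ _ q (fun i hi => by
        intro hc
        exact (Finset.ne_of_mem_erase hi) (congrArg Prod.fst hc)),
      show (q.1, σ q.1) = q from Prod.ext rfl hval, pderiv_X_self]
    ring
  · rw [if_neg hq]
    apply pd_prod_zero
    intro i hi hc
    have h1 : i = q.1 := congrArg Prod.fst hc
    have h2 : σ i = q.2 := congrArg Prod.snd hc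
    subst h1
    exact hq ⟨hi, h2⟩
lemma val_zero_iff {m : ℕ} [NeZero m] (a : Fin m) : a.val = 0 ↔ a = 0 := by
  rw [← Fin.val_zero (n := m), Fin.val_eq_val]

lemma prod_x_eval {m : ℕ} [NeZero m] (x : Fin m × Fin m → ℂ)
    (hx : ∀ p, x p = if p.1.val = 0 ∧ p.2.val = 0 then 1 - (m : ℂ) else 1)
    (σ : Equiv.Perm (Fin m)) (p1 q1 : Fin m) :
    ∏ i ∈ (Finset.univ.erase q1).erase p1, x (i, σ i)
      = if p1 ≠ 0 ∧ q1 ≠ 0 ∧ σ 0 = 0 then 1 - (m : ℂ) else 1 := by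
  have hfac : ∀ i : Fin m, x (i, σ i) = if i = 0 ∧ σ 0 = 0 then 1 - (m : ℂ) else 1 := by
    intro i
    rw [hx]
    refine if_congr ?_ rfl rfl
    constructor
    · rintro ⟨h1, h2⟩
      have hi0 : i = 0 := (val_zero_iff i).mp h1
      subst hi0
      exact ⟨rfl, (val_zero_iff _).mp h2⟩
    · rintro ⟨rfl, h2⟩
      exact ⟨rfl, by rw [h2]; rfl⟩
  by_cases h0 : p1 ≠ 0 ∧ q1 ≠ 0 ∧ σ 0 = 0
  · rw [if_pos h0]
    have h0mem : (0 : Fin m) ∈ (Finset.univ.erase q1).erase p1 := by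
      simp [Finset.mem_erase, Ne.symm h0.1, Ne.symm h0.2.1]
    rw [← Finset.mul_prod_erase _ _ h0mem, hfac 0, if_pos ⟨rfl, h0.2.2⟩,
      Finset.prod_eq_one, mul_one]
    intro i hi
    rw [hfac i, if_neg]
    rintro ⟨rfl, -⟩
    exact Finset.ne_of_mem_erase hi rfl
  · rw [if_neg h0, Finset.prod_eq_one]
    intro i hi
    rw [hfac i, if_neg]
    rintro ⟨rfl, hσ⟩
    rw [Finset.mem_erase, Finset.mem_erase] at hi
    exact h0 ⟨Ne.symm hi.1, Ne.symm hi.2.1, hσ⟩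

lemma entry_formula {m : ℕ} [NeZero m] (x : Fin m × Fin m → ℂ)
    (hx : ∀ p, x p = if p.1.val = 0 ∧ p.2.val = 0 then 1 - (m : ℂ) else 1)
    (p q : Fin m × Fin m) :
    eval x (pderiv p (pderiv q (∑ σ : Equiv.Perm (Fin m), ∏ i, (X (i, σ i) : MvPolynomial (Fin m × Fin m) ℂ))))
      = (if p.1 ≠ q.1 ∧ p.2 ≠ q.2 then ((m - 2).factorial : ℂ) else 0)
        - (m : ℂ) * (if p.1 ≠ q.1 ∧ p.2 ≠ q.2 ∧ p.1 ≠ 0 ∧ q.1 ≠ 0 ∧ p.2 ≠ 0 ∧ q.2 ≠ 0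
            then ((m - 3).factorial : ℂ) else 0) := by
  classical
  rw [map_sum, map_sum, map_sum]
  have hterm : ∀ σ : Equiv.Perm (Fin m),
      eval x (pderiv p (pderiv q (∏ i, (X (i, σ i) : MvPolynomial (Fin m × Fin m) ℂ))))
        = if σ q.1 = q.2 ∧ σ p.1 = p.2 ∧ p.1 ≠ q.1
            then (if p.1 ≠ 0 ∧ q.1 ≠ 0 ∧ σ 0 = 0 then 1 - (m : ℂ) else 1) else 0 := by
    intro σ
    rw [pd_prod]
    by_cases h1 : σ q.1 = q.2
    · rw [if_pos ⟨Finset.mem_univ _, h1⟩, pd_prod]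
      by_cases h2 : σ p.1 = p.2 ∧ p.1 ≠ q.1
      · rw [if_pos ⟨Finset.mem_erase.mpr ⟨h2.2, Finset.mem_univ _⟩, h2.1⟩,
          if_pos ⟨h1, h2.1, h2.2⟩]
        rw [map_prod]
        simp only [eval_X]
        exact prod_x_eval x hx σ p.1 q.1
      · rw [if_neg, if_neg, map_zero]
        · rintro ⟨hh1, hh2, hh3⟩; exact h2 ⟨hh2, hh3⟩
        · rintro ⟨hmem, hval⟩
          exact h2 ⟨hval, (Finset.mem_erase.mp hmem).1⟩
    · rw [if_neg (fun h => h1 h.2), map_zero, map_zero,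
        if_neg (fun h => h1 h.1)]
  rw [Finset.sum_congr rfl fun σ _ => hterm σ]
  have hsplit : ∀ σ : Equiv.Perm (Fin m),
      (if σ q.1 = q.2 ∧ σ p.1 = p.2 ∧ p.1 ≠ q.1
          then (if p.1 ≠ 0 ∧ q.1 ≠ 0 ∧ σ 0 = 0 then 1 - (m : ℂ) else 1) else 0)
        = (if σ q.1 = q.2 ∧ σ p.1 = p.2 ∧ p.1 ≠ q.1 then (1 : ℂ) else 0)
          + (if (σ q.1 = q.2 ∧ σ p.1 = p.2 ∧ p.1 ≠ q.1) ∧ (p.1 ≠ 0 ∧ q.1 ≠ 0 ∧ σ 0 = 0)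
              then -(m : ℂ) else 0) := by
    intro σ
    by_cases hP : σ q.1 = q.2 ∧ σ p.1 = p.2 ∧ p.1 ≠ q.1
    · by_cases hQ : p.1 ≠ 0 ∧ q.1 ≠ 0 ∧ σ 0 = 0
      · rw [if_pos hP, if_pos hP, if_pos hQ, if_pos ⟨hP, hQ⟩]; ring
      · rw [if_pos hP, if_pos hP, if_neg hQ, if_neg (fun h => hQ h.2)]; ring
    · rw [if_neg hP, if_neg hP, if_neg (fun h => hP h.1)]; ring
  rw [Finset.sum_congr rfl fun σ _ => hsplit σ, Finset.sum_add_distrib, Finset.sum_boole,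
    Finset.sum_ite, Finset.sum_const, Finset.sum_const_zero, add_zero, nsmul_eq_mul]
  have haveA : ((Finset.univ.filter fun σ : Equiv.Perm (Fin m) =>
        σ q.1 = q.2 ∧ σ p.1 = p.2 ∧ p.1 ≠ q.1).card : ℂ)
      = if p.1 ≠ q.1 ∧ p.2 ≠ q.2 then ((m - 2).factorial : ℂ) else 0 := by
    by_cases hc : p.1 ≠ q.1 ∧ p.2 ≠ q.2
    · rw [if_pos hc]
      have hcount := count_two q.1 p.1 q.2 p.2 (Ne.symm hc.1) (Ne.symm hc.2)
      have heq : (Finset.univ.filter fun σ : Equiv.Perm (Fin m) =>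
            σ q.1 = q.2 ∧ σ p.1 = p.2 ∧ p.1 ≠ q.1).card
          = (m - 2).factorial :=
        (congrArg Finset.card (Finset.filter_congr fun σ _ =>
          ⟨fun h => ⟨h.1, h.2.1⟩, fun h => ⟨h.1, h.2, hc.1⟩⟩)).trans hcount
      rw [heq]
    · rw [if_neg hc]
      have heq : (Finset.univ.filter fun σ : Equiv.Perm (Fin m) =>
            σ q.1 = q.2 ∧ σ p.1 = p.2 ∧ p.1 ≠ q.1) = ∅ := by
        rw [Finset.filter_eq_empty_iff]
        intro σ _
        rintro ⟨h1, h2, h3⟩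
        apply hc
        refine ⟨h3, fun h22 => h3 ?_⟩
        exact σ.injective (h2.trans (h22.trans h1.symm))
      rw [heq]
      simp
  have haveB : ((Finset.univ.filter fun σ : Equiv.Perm (Fin m) =>
        (σ q.1 = q.2 ∧ σ p.1 = p.2 ∧ p.1 ≠ q.1) ∧ (p.1 ≠ 0 ∧ q.1 ≠ 0 ∧ σ 0 = 0)).card : ℂ)
      = if p.1 ≠ q.1 ∧ p.2 ≠ q.2 ∧ p.1 ≠ 0 ∧ q.1 ≠ 0 ∧ p.2 ≠ 0 ∧ q.2 ≠ 0
          then ((m - 3).factorial : ℂ) else 0 := by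
    by_cases hc : p.1 ≠ q.1 ∧ p.2 ≠ q.2 ∧ p.1 ≠ 0 ∧ q.1 ≠ 0 ∧ p.2 ≠ 0 ∧ q.2 ≠ 0
    · rw [if_pos hc]
      obtain ⟨hc1, hc2, hc3, hc4, hc5, hc6⟩ := hc
      have hcount := count_three q.1 p.1 0 q.2 p.2 0 (Ne.symm hc1) hc4 hc3
        (Ne.symm hc2) hc6 hc5
      have heq : (Finset.univ.filter fun σ : Equiv.Perm (Fin m) =>
            (σ q.1 = q.2 ∧ σ p.1 = p.2 ∧ p.1 ≠ q.1) ∧ (p.1 ≠ 0 ∧ q.1 ≠ 0 ∧ σ 0 = 0)).card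
          = (m - 3).factorial :=
        (congrArg Finset.card (Finset.filter_congr fun σ _ =>
          ⟨fun h => ⟨h.1.1, h.1.2.1, h.2.2.2⟩,
            fun h => ⟨⟨h.1, h.2.1, hc1⟩, hc3, hc4, h.2.2⟩⟩)).trans hcount
      rw [heq]
    · rw [if_neg hc]
      have heq : (Finset.univ.filter fun σ : Equiv.Perm (Fin m) =>
            (σ q.1 = q.2 ∧ σ p.1 = p.2 ∧ p.1 ≠ q.1) ∧ (p.1 ≠ 0 ∧ q.1 ≠ 0 ∧ σ 0 = 0)) = ∅ := by
        rw [Finset.filter_eq_empty_iff]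
        intro σ _
        rintro ⟨⟨h1, h2, h3⟩, h4, h5, h6⟩
        apply hc
        refine ⟨h3, fun h22 => h3 (σ.injective (h2.trans (h22.trans h1.symm))), h4, h5,
          fun h20 => h4 (σ.injective (h2.trans (h20.trans h6.symm))),
          fun h10 => h5 (σ.injective (h1.trans (h10.trans h6.symm)))⟩
      rw [heq]
      simp
  rw [haveA, haveB]
  ring
noncomputable def matA (m : ℕ) : Matrix (Fin m) (Fin m) ℂ :=
  Matrix.of fun i k => if i = k then 0 else 1

noncomputable def matA' (m : ℕ) : Matrix (Fin m) (Fin m) ℂ :=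
  Matrix.of fun i k => ((m : ℂ) - 1)⁻¹ - if i = k then 1 else 0

noncomputable def matB (m : ℕ) [NeZero m] : Matrix (Fin m) (Fin m) ℂ :=
  Matrix.of fun i k => if i ≠ k ∧ i ≠ 0 ∧ k ≠ 0 then 1 else 0

noncomputable def matC (m : ℕ) [NeZero m] : Matrix (Fin m) (Fin m) ℂ :=
  Matrix.of fun i k => if k = 0 then 0 else
    (((m : ℂ) - 2) * ((m : ℂ) - 1)⁻¹ - if i ≠ 0 ∧ i ≠ k then 1 else 0)

noncomputable def matP (m : ℕ) [NeZero m] : Matrix (Fin m) (Fin m) ℂ :=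
  Matrix.of fun i k => if i ≠ 0 ∧ k ≠ 0 then ((if i = k then 1 else 0) - ((m : ℂ) - 1)⁻¹) else 0

variable {m : ℕ} [NeZero m]

lemma hm1 (hm : 2 ≤ m) : ((m : ℂ) - 1) ≠ 0 := by
  have h : ((m - 1 : ℕ) : ℂ) ≠ 0 := Nat.cast_ne_zero.mpr (by omega)
  rwa [Nat.cast_sub (by omega), Nat.cast_one] at h

lemma L1 (hm : 2 ≤ m) : matA m * matA' m = 1 := by
  have e1 := hm1 (m := m) hm
  ext i k
  rw [Matrix.mul_apply]
  have key : ∀ s ∈ Finset.univ, matA m i s * matA' m s k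
      = ((m : ℂ) - 1)⁻¹ - (if s = k then (1:ℂ) else 0)
        - (if s = i then ((m : ℂ) - 1)⁻¹ else 0)
        + (if s = i then (if i = k then (1:ℂ) else 0) else 0) := by
    intro s _
    simp only [matA, matA', Matrix.of_apply]
    split_ifs <;> subst_vars <;> simp_all <;> ring
  rw [Finset.sum_congr rfl key]
  rw [Finset.sum_add_distrib, Finset.sum_sub_distrib, Finset.sum_sub_distrib,
    Finset.sum_const, Finset.sum_ite_eq' Finset.univ k, Finset.sum_ite_eq' Finset.univ i,
    Finset.sum_ite_eq' Finset.univ i]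
  simp only [Finset.mem_univ, if_true, Finset.card_univ, Fintype.card_fin, nsmul_eq_mul,
    Matrix.one_apply]
  split_ifs <;> field_simp <;> ring

lemma L2 (hm : 2 ≤ m) : matA m * matC m = matB m := by
  have e1 := hm1 (m := m) hm
  ext i k
  rw [Matrix.mul_apply]
  by_cases hk : k = 0
  · subst hk
    simp [matA, matB, matC]
  · have key : ∀ s ∈ Finset.univ, matA m i s * matC m s k
        = (((m : ℂ) - 2) * ((m : ℂ) - 1)⁻¹ - 1)
          + (if s = (0:Fin m) then (1:ℂ) else 0) + (if s = k then (1:ℂ) else 0)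
          + (if s = i then (-(((m : ℂ) - 2) * ((m : ℂ) - 1)⁻¹ - 1)
              - (if i = (0:Fin m) then (1:ℂ) else 0) - (if i = k then (1:ℂ) else 0)) else 0) := by
      intro s _
      simp only [matA, matC, Matrix.of_apply]
      split_ifs <;> subst_vars <;> simp_all <;> ring
    rw [Finset.sum_congr rfl key]
    rw [Finset.sum_add_distrib, Finset.sum_add_distrib, Finset.sum_add_distrib,
      Finset.sum_const, Finset.sum_ite_eq' Finset.univ (0:Fin m),
      Finset.sum_ite_eq' Finset.univ k, Finset.sum_ite_eq' Finset.univ i]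
    simp only [Finset.mem_univ, if_true, Finset.card_univ, Fintype.card_fin, nsmul_eq_mul,
      matB, Matrix.of_apply]
    by_cases hi0 : i = 0 <;> by_cases hik : i = k <;>
      simp only [hi0, hik, hk, Ne.symm hk, ne_eq, if_true, if_false, not_true, not_false_iff,
        true_and, false_and, and_true, and_false, not_not, ite_true, ite_false,
        not_false_eq_true] <;>
      field_simp <;> ring

lemma L3 (hm : 2 ≤ m) : matC m * matC m = matP m := by
  have e1 := hm1 (m := m) hm
  ext i k
  rw [Matrix.mul_apply]
  by_cases hk : k = 0
  · subst hk
    simp [matC, matP]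
  · have key : ∀ s ∈ Finset.univ, matC m i s * matC m s k
        = (((m : ℂ) - 2) * ((m : ℂ) - 1)⁻¹ - (if i = (0:Fin m) then 0 else 1)) * (((m : ℂ) - 2) * ((m : ℂ) - 1)⁻¹ - 1)
          + (if s = (0:Fin m) then -((((m : ℂ) - 2) * ((m : ℂ) - 1)⁻¹ - (if i = (0:Fin m) then 0 else 1)) * (((m : ℂ) - 2) * ((m : ℂ) - 1)⁻¹ - 1)) else 0)
          + (if s = k then (((m : ℂ) - 2) * ((m : ℂ) - 1)⁻¹ - (if i = (0:Fin m) then 0 else 1)) else 0)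
          + (if s = i then (if i = (0:Fin m) then (0:ℂ) else ((((m : ℂ) - 2) * ((m : ℂ) - 1)⁻¹ - 1) + (if i = k then 1 else 0))) else 0) := by
      intro s _
      simp only [matC, Matrix.of_apply]
      split_ifs <;> subst_vars <;> simp_all <;> ring
    rw [Finset.sum_congr rfl key]
    rw [Finset.sum_add_distrib, Finset.sum_add_distrib, Finset.sum_add_distrib,
      Finset.sum_const, Finset.sum_ite_eq' Finset.univ (0:Fin m),
      Finset.sum_ite_eq' Finset.univ k, Finset.sum_ite_eq' Finset.univ i]
    simp only [Finset.mem_univ, if_true, Finset.card_univ, Fintype.card_fin, nsmul_eq_mul,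
      matP, Matrix.of_apply, hk]
    by_cases hi0 : i = 0 <;> by_cases hik : i = k <;>
      simp only [hi0, hik, hk, Ne.symm hk, if_true, if_false, ne_eq, not_true, not_false_iff,
        true_and, false_and, and_true, and_false, if_neg, not_not, not_false_eq_true] <;>
      field_simp <;> ring

lemma L4 (hm : 2 ≤ m) : matC m * matP m = matP m := by
  have e1 := hm1 (m := m) hm
  ext i k
  rw [Matrix.mul_apply]
  by_cases hk : k = 0
  · subst hk
    simp [matC, matP]
  · have key : ∀ s ∈ Finset.univ, matC m i s * matP m s k
        = -((((m : ℂ) - 2) * ((m : ℂ) - 1)⁻¹ - (if i = (0:Fin m) then 0 else 1)) * ((m : ℂ) - 1)⁻¹)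
          + (if s = (0:Fin m) then ((((m : ℂ) - 2) * ((m : ℂ) - 1)⁻¹ - (if i = (0:Fin m) then 0 else 1)) * ((m : ℂ) - 1)⁻¹) else 0)
          + (if s = k then (((m : ℂ) - 2) * ((m : ℂ) - 1)⁻¹ - (if i = (0:Fin m) then 0 else 1)) else 0)
          + (if s = i then (if i = (0:Fin m) then (0:ℂ) else ((if i = k then (1:ℂ) else 0) - ((m : ℂ) - 1)⁻¹)) else 0) := by
      intro s _
      simp only [matC, matP, Matrix.of_apply]
      split_ifs <;> subst_vars <;> simp_all <;> ring
    rw [Finset.sum_congr rfl key]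
    rw [Finset.sum_add_distrib, Finset.sum_add_distrib, Finset.sum_add_distrib,
      Finset.sum_const, Finset.sum_ite_eq' Finset.univ (0:Fin m),
      Finset.sum_ite_eq' Finset.univ k, Finset.sum_ite_eq' Finset.univ i]
    simp only [Finset.mem_univ, if_true, Finset.card_univ, Fintype.card_fin, nsmul_eq_mul,
      matP, Matrix.of_apply, hk]
    by_cases hi0 : i = 0 <;> by_cases hik : i = k <;>
      simp only [hi0, hik, hk, Ne.symm hk, if_true, if_false, ne_eq, not_true, not_false_iff,
        true_and, false_and, and_true, and_false, if_neg, not_not, not_false_eq_true] <;>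
      field_simp <;> ring

lemma CCC {m : ℕ} [NeZero m] (hm : 2 ≤ m) : matC m * (matC m * matC m) = matC m * matC m := by
  rw [L3 hm, L4 hm, ← L3 hm]

/-- At the point `x` with `(1,1)` entry `1 - m` and all other entries `1`, the
Hessian matrix of second partial derivatives of the permanent `perm_m` is an
invertible `m² × m²` matrix (its determinant is nonzero, so it has maximal
rank `m²`). -/
theorem hessian_of_permanent_invertible (m : ℕ) (hm : 2 ≤ m)
    (permPoly : MvPolynomial (Fin m × Fin m) ℂ)
    (hperm : permPoly = ∑ σ : Equiv.Perm (Fin m), ∏ i, X (i, σ i))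
    (x : Fin m × Fin m → ℂ)
    (hx : ∀ p, x p = if p.1.val = 0 ∧ p.2.val = 0 then 1 - (m : ℂ) else 1) :
    Matrix.det (Matrix.of fun p q : Fin m × Fin m =>
        eval x (pderiv p (pderiv q permPoly))) ≠ 0 := by
  haveI : NeZero m := ⟨by omega⟩
  classical
  set α : ℂ := ((m - 2).factorial : ℂ) with hαdef
  set β : ℂ := (m : ℂ) * ((m - 3).factorial : ℂ) with hβdef
  -- scalar facts
  have hα : α ≠ 0 := Nat.cast_ne_zero.mpr (Nat.factorial_ne_zero _)
  have hαβ : α - β ≠ 0 := by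
    rcases eq_or_lt_of_le hm with h2 | h3
    · subst h2
      rw [hαdef, hβdef]
      norm_num [Nat.factorial]
    · have h3' : 3 ≤ m := h3
      have f0 : ((m - 3).factorial : ℂ) ≠ 0 := Nat.cast_ne_zero.mpr (Nat.factorial_ne_zero _)
      have hfa : α = ((m : ℂ) - 2) * ((m - 3).factorial : ℂ) := by
        rw [hαdef, show m - 2 = (m - 3) + 1 by omega, Nat.factorial_succ]
        push_cast [Nat.cast_sub h3']
        ring
      rw [hfa, hβdef]
      have : ((m : ℂ) - 2) * ((m - 3).factorial : ℂ) - (m : ℂ) * ((m - 3).factorial : ℂ)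
          = (-2) * ((m - 3).factorial : ℂ) := by ring
      rw [this]
      exact mul_ne_zero (by norm_num) f0
  -- Hessian as combination of Kronecker products
  set D := matC m ⊗ₖ matC m with hDdef
  set H : Matrix (Fin m × Fin m) (Fin m × Fin m) ℂ :=
    Matrix.of (fun p q : Fin m × Fin m => eval x (pderiv p (pderiv q permPoly))) with hHdef
  have hH : H = α • (matA m ⊗ₖ matA m) - β • (matB m ⊗ₖ matB m) := by
    ext ⟨i, j⟩ ⟨k, l⟩
    rw [hHdef, Matrix.of_apply, hperm, entry_formula x hx (i, j) (k, l)]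
    simp only [Matrix.sub_apply, Matrix.smul_apply, Matrix.kroneckerMap_apply, smul_eq_mul]
    by_cases c1 : i = k <;> by_cases c2 : j = l <;> by_cases c3 : i = 0 <;>
      by_cases c4 : k = 0 <;> by_cases c5 : j = 0 <;> by_cases c6 : l = 0 <;>
      simp [matA, matB, c1, c2, c3, c4, c5, c6, hβdef, eq_comm] <;> ring
  -- D³ = D²
  have hD3 : D * (D * D) = D * D := by
    rw [hDdef, ← Matrix.mul_kronecker_mul, ← Matrix.mul_kronecker_mul, CCC hm]
  -- inverse of M := α•1 - β•D
  set M : Matrix (Fin m × Fin m) (Fin m × Fin m) ℂ := α • 1 - β • D with hMdef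
  set N : Matrix (Fin m × Fin m) (Fin m × Fin m) ℂ :=
    α⁻¹ • 1 + (β / α ^ 2) • D + (β ^ 2 / (α ^ 2 * (α - β))) • (D * D) with hNdef
  have k1 : α * α⁻¹ = 1 := mul_inv_cancel₀ hα
  have k2 : α * (β / α ^ 2) - β * α⁻¹ = 0 := by
    field_simp
    ring
  have k3 : α * (β ^ 2 / (α ^ 2 * (α - β))) - β * (β / α ^ 2)
      = β * (β ^ 2 / (α ^ 2 * (α - β))) := by
    field_simp
    ring
  have expand : M * N = (α * α⁻¹) • (1 : Matrix (Fin m × Fin m) (Fin m × Fin m) ℂ)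
      + (α * (β / α ^ 2) - β * α⁻¹) • D
      + (α * (β ^ 2 / (α ^ 2 * (α - β))) - β * (β / α ^ 2)) • (D * D)
      - (β * (β ^ 2 / (α ^ 2 * (α - β)))) • (D * (D * D)) := by
    rw [hMdef, hNdef]
    simp only [Matrix.sub_mul, Matrix.mul_add, Matrix.smul_mul, Matrix.mul_smul, smul_smul,
      Matrix.one_mul, Matrix.mul_one]
    module
  have hMN : M * N = 1 := by
    rw [expand, hD3, k1, k2, k3, add_sub_cancel_right, one_smul, zero_smul, add_zero]
  -- A ⊗ A invertible
  have hAA : (matA m ⊗ₖ matA m) * (matA' m ⊗ₖ matA' m) = 1 := by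
    rw [← Matrix.mul_kronecker_mul, L1 hm, Matrix.one_kronecker_one]
  -- factorization
  have hfact : H = (matA m ⊗ₖ matA m) * M := by
    rw [hH, hMdef, Matrix.mul_sub, Matrix.mul_smul, Matrix.mul_one, Matrix.mul_smul,
      hDdef, ← Matrix.mul_kronecker_mul, L2 hm]
  have hHG : H * (N * (matA' m ⊗ₖ matA' m)) = 1 := by
    rw [hfact, Matrix.mul_assoc, ← Matrix.mul_assoc M N, hMN, Matrix.one_mul, hAA]
  intro h0
  have hdet := Matrix.det_mul H (N * (matA' m ⊗ₖ matA' m))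
  rw [hHG, Matrix.det_one, h0, zero_mul] at hdet
  exact zero_ne_one hdet.symm
end

section
/- Let V be a complex vector space with basis x_1,…,x_v and suppose w ∈ S^d(S^n V) is a highest weight vector of weight π for GL(V) (i.e. annihilated by all raising operators and of weight π). Then (x_1^n)·w ∈ S^{d+1}(S^n V) is a highest weight vector of weight (n) + π. Consequently mult(S_{(dn−|μ|, μ)}V, S^d(S^n V)) ≤ mult(S_{((d+1)n−|μ|, μ)}V, S^{d+1}(S^n V)) for any fixed partition μ, i.e. this plethysm multiplicity is non-decreasing in d. -/
noncomputable section

/-- Exponent vectors of monomials of degree `n` in `v + 1` variables: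
a basis of `S^n V` for `dim V = v + 1`. -/
def PlethMon (v n : ℕ) : Type := {f : Fin (v + 1) → ℕ // ∑ i, f i = n}

/-- The model for `S^d(S^n V)`: degree-`d` homogeneous polynomials in
variables indexed by the degree-`n` monomials of `V`. -/
abbrev PlethRing (v n : ℕ) : Type := MvPolynomial (PlethMon v n) ℂ

lemma plethMon_shift_sum {v n : ℕ} (α : PlethMon v n) (i j : Fin (v + 1))
    (hj : α.1 j ≠ 0) :
    ∑ k, (α.1 k + (if k = i then 1 else 0) - (if k = j then 1 else 0)) = n := by
  have hj' : 1 ≤ α.1 j := Nat.one_le_iff_ne_zero.mpr hj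
  have key : ∀ k, ((α.1 k + (if k = i then 1 else 0) - (if k = j then 1 else 0) : ℕ) : ℤ)
      = (α.1 k : ℤ) + (if k = i then (1 : ℤ) else 0) - (if k = j then (1 : ℤ) else 0) := by
    intro k
    rcases eq_or_ne k j with rfl | hkj
    · split_ifs <;> simp <;> omega
    · split_ifs <;> simp [hkj] <;> omega
  have hcast : ((∑ k, (α.1 k + (if k = i then 1 else 0) - (if k = j then 1 else 0)) : ℕ) : ℤ)
      = (n : ℤ) := by
    rw [Nat.cast_sum, Finset.sum_congr rfl fun k _ => key k]
    have h1 : ∑ k : Fin (v + 1), ((if k = i then (1 : ℤ) else 0)) = 1 := by simp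
    have h2 : ∑ k : Fin (v + 1), ((if k = j then (1 : ℤ) else 0)) = 1 := by simp
    have h3 : ∑ k : Fin (v + 1), (α.1 k : ℤ) = (n : ℤ) := by
      rw [← Nat.cast_sum, α.2]
    simp only [Finset.sum_sub_distrib, Finset.sum_add_distrib, h1, h2, h3]
    ring
  exact_mod_cast hcast

/-- The Lie algebra element `E_{ij}` of `gl(V)` (sending `x_j` to `x_i`) acting
on `S^d(S^n V)` as a derivation: on a variable `z_α` (for `α` a degree-`n`
monomial) it gives `α_j · z_{α + e_i - e_j}`. -/
def raiseOp (v n : ℕ) (i j : Fin (v + 1)) :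
    Derivation ℂ (PlethRing v n) (PlethRing v n) :=
  MvPolynomial.mkDerivation ℂ fun α : PlethMon v n =>
    if h : α.1 j = 0 then 0
    else (α.1 j : ℂ) •
      (MvPolynomial.X ⟨fun k => α.1 k + (if k = i then 1 else 0) - (if k = j then 1 else 0),
        plethMon_shift_sum α i j h⟩ : PlethRing v n)

/-- The space of highest weight vectors of weight `π` (together with `0`) in
the degree-`d` part of `S^d(S^n V)`: homogeneous of degree `d`, an eigenvector
of the torus operators `E_{ii}` with eigenvalue `π i`, and killed by the
raising operators `E_{ij}`, `i < j`.  Its dimension is the multiplicity of the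
irreducible `GL(V)`-module `S_π V` in `S^d(S^n V)`. -/
def hwvSpace (v n d : ℕ) (π : Fin (v + 1) → ℕ) : Submodule ℂ (PlethRing v n) :=
  MvPolynomial.homogeneousSubmodule (PlethMon v n) ℂ d ⊓
    (⨅ i : Fin (v + 1),
      LinearMap.ker ((raiseOp v n i i).toLinearMap - (π i : ℂ) • LinearMap.id)) ⊓
    (⨅ i : Fin (v + 1), ⨅ j : Fin (v + 1), ⨅ _ : i < j,
      LinearMap.ker (raiseOp v n i j).toLinearMap)

/-- The basis vector `x_1^n` of `S^n V`, i.e. the variable `z_{(n,0,…,0)}`. -/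
def xOneN (v n : ℕ) : PlethMon v n :=
  ⟨fun k => if k = 0 then n else 0, by simp⟩

open MvPolynomial in
lemma raiseOp_X {v n : ℕ} (i j : Fin (v + 1)) (α : PlethMon v n) :
    raiseOp v n i j (MvPolynomial.X α) =
      if h : α.1 j = 0 then 0
      else (α.1 j : ℂ) •
        (MvPolynomial.X ⟨fun k => α.1 k + (if k = i then 1 else 0) - (if k = j then 1 else 0),
          plethMon_shift_sum α i j h⟩ : PlethRing v n) := by
  simp [raiseOp, MvPolynomial.mkDerivation_X]

lemma raiseOp_diag_X {v n : ℕ} (i : Fin (v + 1)) (α : PlethMon v n) :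
    raiseOp v n i i (MvPolynomial.X α) = (α.1 i : ℂ) • MvPolynomial.X α := by
  rw [raiseOp_X]
  by_cases h : α.1 i = 0
  · simp [h]
  · have hfun : (⟨fun k => α.1 k + (if k = i then 1 else 0) - (if k = i then 1 else 0),
        plethMon_shift_sum α i i h⟩ : PlethMon v n) = α := by
      apply Subtype.ext; funext k; by_cases hk : k = i <;> simp [hk]
    rw [dif_neg h, hfun]

lemma raiseOp_off_xOneN {v n : ℕ} (i j : Fin (v + 1)) (hij : i < j) :
    raiseOp v n i j (MvPolynomial.X (xOneN v n)) = 0 := by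
  rw [raiseOp_X]
  have hj : j ≠ 0 := by
    intro h; subst h; exact absurd hij (by simp [Fin.lt_def])
  simp [xOneN, hj]

/-- Manivel's monotonicity (Prop. 5): multiplication by `x_1^n` sends a highest
weight vector of weight `π` in `S^d(S^n V)` to a (nonzero) highest weight
vector of weight `(n) + π` in `S^{d+1}(S^n V)`; consequently, for a partition
`π` of `dn` (so `π = (dn - |μ|, μ)`), the plethysm multiplicity
`mult(S_{(dn-|μ|,μ)}V, S^d(S^n V))` is non-decreasing as `d ↦ d + 1`. -/


theorem hwv_mul_xOneN_and_plethysm_monotone (v n : ℕ) :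
    (∀ (d : ℕ) (π : Fin (v + 1) → ℕ) (w : PlethRing v n),
      w ∈ hwvSpace v n d π →
        (MvPolynomial.X (xOneN v n) * w ∈
            hwvSpace v n (d + 1) (fun i => π i + if i = 0 then n else 0) ∧
          (w ≠ 0 → MvPolynomial.X (xOneN v n) * w ≠ 0))) ∧
    (∀ (d : ℕ) (π : Fin (v + 1) → ℕ), (∑ i, π i = d * n) → Antitone π →
      Module.rank ℂ (hwvSpace v n d π) ≤
        Module.rank ℂ (hwvSpace v n (d + 1) (fun i => π i + if i = 0 then n else 0))) := by
  classical
  have key : ∀ (d : ℕ) (π : Fin (v + 1) → ℕ) (w : PlethRing v n),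
      w ∈ hwvSpace v n d π →
        MvPolynomial.X (xOneN v n) * w ∈
          hwvSpace v n (d + 1) (fun i => π i + if i = 0 then n else 0) := by
    intro d π w hw
    rw [hwvSpace] at hw ⊢
    simp only [Submodule.mem_inf, Submodule.mem_iInf, LinearMap.mem_ker,
      LinearMap.sub_apply, LinearMap.smul_apply, LinearMap.id_apply,
      Derivation.coeFn_coe, sub_eq_zero] at hw ⊢
    obtain ⟨⟨hhom, htor⟩, hraise⟩ := hw
    refine ⟨⟨?_, ?_⟩, ?_⟩
    · rw [MvPolynomial.mem_homogeneousSubmodule] at hhom ⊢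
      have := (MvPolynomial.isHomogeneous_X ℂ (xOneN v n)).mul hhom
      rwa [add_comm] at this
    · intro i
      have hx : raiseOp v n i i (MvPolynomial.X (xOneN v n) * w)
          = MvPolynomial.X (xOneN v n) • raiseOp v n i i w
            + w • raiseOp v n i i (MvPolynomial.X (xOneN v n)) :=
        Derivation.leibniz _ _ _
      rw [hx, htor i, raiseOp_diag_X]
      have : (xOneN v n).1 i = if i = 0 then n else 0 := rfl
      rw [this]
      push_cast
      rw [add_smul]
      simp only [smul_eq_mul]
      rw [mul_smul_comm, mul_smul_comm, mul_comm w]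
    · intro i j hij
      have hx : raiseOp v n i j (MvPolynomial.X (xOneN v n) * w)
          = MvPolynomial.X (xOneN v n) • raiseOp v n i j w
            + w • raiseOp v n i j (MvPolynomial.X (xOneN v n)) :=
        Derivation.leibniz _ _ _
      rw [hx, hraise i j hij, raiseOp_off_xOneN i j hij]
      simp
  have hXne : (MvPolynomial.X (xOneN v n) : PlethRing v n) ≠ 0 := MvPolynomial.X_ne_zero _
  constructor
  · intro d π w hw
    refine ⟨key d π w hw, fun hwne => ?_⟩
    exact mul_ne_zero hXne hwne
  · intro d π _ _
    let f : hwvSpace v n d π →ₗ[ℂ]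
        hwvSpace v n (d + 1) (fun i => π i + if i = 0 then n else 0) :=
      LinearMap.codRestrict _
        ((LinearMap.mulLeft ℂ (MvPolynomial.X (xOneN v n))).comp
          (hwvSpace v n d π).subtype)
        (fun w => key d π w.1 w.2)
    have hfinj : Function.Injective f := by
      intro a b hab
      have : MvPolynomial.X (xOneN v n) * a.1 = MvPolynomial.X (xOneN v n) * b.1 := by
        have := congrArg Subtype.val hab
        simpa [f, LinearMap.codRestrict, LinearMap.mulLeft] using this
      exact Subtype.ext (mul_left_cancel₀ hXne this)
    exact LinearMap.rank_le_of_injective f hfinj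


end
end
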